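/- Let t₀ ≥ 0 and let A : [t₀,∞) → (0,∞) be continuous with ∫_{t₀}^∞ A(t) dt = ∞. Let Θ : [t₀,∞) → ℝ be twice differentiable with Θ''(t) = A(t)Θ(t) for all t ≥ t₀, and suppose that for some t₁ ≥ t₀ one has Θ(t₁) > 0 and Θ'(t₁) ≥ 0. Then Θ(t) → ∞ as t → ∞. -/

import Mathlib

open MeasureTheory Filter Set

/-- `Θ`, with derivative `Θ'`, solves the second order linear ODE `Θ'' = A Θ` on the
half-line `[t₀, ∞)` (derivatives at the endpoint `t₀` are one-sided). -/
def IsSolOn (t₀ : ℝ) (A Θ Θ' : ℝ → ℝ) : Prop :=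
  ∀ t ∈ Set.Ici t₀,
    HasDerivWithinAt Θ (Θ' t) (Set.Ici t₀) t ∧
    HasDerivWithinAt Θ' (A t * Θ t) (Set.Ici t₀) t

/-- Positivity is preserved: if `Θ t₁ > 0` and `Θ' t₁ ≥ 0` then `Θ > 0` on `[t₁, ∞)`. -/
lemma aux_pos_on {t₀ : ℝ} {A Θ Θ' : ℝ → ℝ} (hsol : IsSolOn t₀ A Θ Θ')
    (hApos : ∀ t ≥ t₀, 0 < A t) {t₁ : ℝ} (ht₁ : t₀ ≤ t₁)
    (h1 : 0 < Θ t₁) (h2 : 0 ≤ Θ' t₁) : ∀ t ≥ t₁, 0 < Θ t := by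
  have hΘc : ContinuousOn Θ (Set.Ici t₀) := fun t ht => (hsol t ht).1.continuousWithinAt
  have hΘ'c : ContinuousOn Θ' (Set.Ici t₀) := fun t ht => (hsol t ht).2.continuousWithinAt
  have hsub : Set.Ici t₁ ⊆ Set.Ici t₀ := Set.Ici_subset_Ici.mpr ht₁
  by_contra hcon
  push_neg at hcon
  obtain ⟨τ, hτ1, hτ2⟩ := hcon
  set S : Set ℝ := Set.Ici t₁ ∩ Θ ⁻¹' (Set.Iic 0) with hS
  have hScl : IsClosed S :=
    (hΘc.mono hsub).preimage_isClosed_of_isClosed isClosed_Ici isClosed_Iic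
  have hSne : S.Nonempty := ⟨τ, hτ1, hτ2⟩
  have hSbdd : BddBelow S := ⟨t₁, fun x hx => hx.1⟩
  set T := sInf S with hT
  have hTS : T ∈ S := hScl.csInf_mem hSne hSbdd
  have hT1 : t₁ ≤ T := hTS.1
  have hT2 : Θ T ≤ 0 := hTS.2
  have hTne : t₁ < T := by
    rcases eq_or_lt_of_le hT1 with h | h
    · exact absurd (h ▸ hT2) (not_le.mpr h1)
    · exact h
  have hposlt : ∀ s, t₁ ≤ s → s < T → 0 < Θ s := by
    intro s hs1 hs2
    by_contra hns
    exact absurd (csInf_le hSbdd ⟨hs1, not_lt.mp hns⟩) (not_le.mpr hs2)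
  have hIccsub : Set.Icc t₁ T ⊆ Set.Ici t₀ := fun x hx => le_trans ht₁ hx.1
  -- Θ' is monotone on [t₁, T]
  have hmono' : MonotoneOn Θ' (Set.Icc t₁ T) := by
    apply monotoneOn_of_hasDerivWithinAt_nonneg (convex_Icc _ _)
      (hΘ'c.mono hIccsub) (f' := fun x => A x * Θ x)
    · intro x hx
      rw [interior_Icc] at hx
      exact ((hsol x (hIccsub (Set.Ioo_subset_Icc_self hx))).2).mono
        (interior_subset.trans hIccsub)
    · intro x hx
      rw [interior_Icc] at hx
      exact mul_nonneg (hApos x (le_trans ht₁ hx.1.le)).le (hposlt x hx.1.le hx.2).le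
  have hder0 : ∀ s ∈ Set.Icc t₁ T, 0 ≤ Θ' s := fun s hs =>
    le_trans h2 (hmono' (Set.left_mem_Icc.mpr hT1) hs hs.1)
  have hmono : MonotoneOn Θ (Set.Icc t₁ T) := by
    apply monotoneOn_of_hasDerivWithinAt_nonneg (convex_Icc _ _)
      (hΘc.mono hIccsub) (f' := Θ')
    · intro x hx
      rw [interior_Icc] at hx
      exact ((hsol x (hIccsub (Set.Ioo_subset_Icc_self hx))).1).mono
        (interior_subset.trans hIccsub)
    · intro x hx
      rw [interior_Icc] at hx
      exact hder0 x (Set.Ioo_subset_Icc_self hx)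
  have : Θ t₁ ≤ Θ T := hmono (Set.left_mem_Icc.mpr hT1) (Set.right_mem_Icc.mpr hT1) hT1
  linarith

theorem tendsto_atTop_of_pos_value_nonneg_deriv (t₀ : ℝ) (ht₀ : 0 ≤ t₀)
    (A : ℝ → ℝ) (hAc : ContinuousOn A (Set.Ici t₀)) (hApos : ∀ t ≥ t₀, 0 < A t)
    (hAint : (∫⁻ t in Set.Ici t₀, ENNReal.ofReal (A t)) = ⊤)
    (Θ Θ' : ℝ → ℝ) (hsol : IsSolOn t₀ A Θ Θ')
    (t₁ : ℝ) (ht₁ : t₀ ≤ t₁) (h1 : 0 < Θ t₁) (h2 : 0 ≤ Θ' t₁) :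
    Filter.Tendsto Θ Filter.atTop Filter.atTop := by
  have hΘc : ContinuousOn Θ (Set.Ici t₀) := fun t ht => (hsol t ht).1.continuousWithinAt
  have hΘ'c : ContinuousOn Θ' (Set.Ici t₀) := fun t ht => (hsol t ht).2.continuousWithinAt
  have hsub : Set.Ici t₁ ⊆ Set.Ici t₀ := Set.Ici_subset_Ici.mpr ht₁
  have hpos : ∀ t ≥ t₁, 0 < Θ t := aux_pos_on hsol hApos ht₁ h1 h2
  -- Θ' is monotone on [t₁, ∞)
  have hmono' : MonotoneOn Θ' (Set.Ici t₁) := by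
    apply monotoneOn_of_hasDerivWithinAt_nonneg (convex_Ici _)
      (hΘ'c.mono hsub) (f' := fun x => A x * Θ x)
    · intro x hx
      rw [interior_Ici] at hx
      exact ((hsol x (hsub (Set.Ioi_subset_Ici_self hx))).2).mono (interior_subset.trans hsub)
    · intro x hx
      rw [interior_Ici] at hx
      exact mul_nonneg (hApos x (le_trans ht₁ hx.le)).le (hpos x hx.le).le
  have hd0 : ∀ t ≥ t₁, 0 ≤ Θ' t := fun t ht => le_trans h2 (hmono' Set.self_mem_Ici ht ht)
  -- Θ is monotone on [t₁, ∞)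
  have hmono : MonotoneOn Θ (Set.Ici t₁) := by
    apply monotoneOn_of_hasDerivWithinAt_nonneg (convex_Ici _)
      (hΘc.mono hsub) (f' := Θ')
    · intro x hx
      rw [interior_Ici] at hx
      exact ((hsol x (hsub (Set.Ioi_subset_Ici_self hx))).1).mono (interior_subset.trans hsub)
    · intro x hx
      rw [interior_Ici] at hx
      exact hd0 x hx.le
  set c := Θ t₁ with hc
  have hgec : ∀ t ≥ t₁, c ≤ Θ t := fun t ht => hmono Set.self_mem_Ici ht ht
  -- the primitive of A
  set F : ℝ → ℝ := fun t => ∫ s in t₁..t, A s with hFdef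
  have hInt : ∀ b, t₁ ≤ b → IntervalIntegrable A volume t₁ b := by
    intro b hb
    apply ContinuousOn.intervalIntegrable
    apply hAc.mono
    rw [Set.uIcc_of_le hb]
    exact fun x hx => le_trans ht₁ hx.1
  have hF : ∀ b ∈ Set.Ici t₁, HasDerivWithinAt F (A b) (Set.Ici t₁) b := by
    intro b hb
    rcases eq_or_lt_of_le (Set.mem_Ici.mp hb) with h | h
    · subst h
      have hmeas : StronglyMeasurableAtFilter A (nhdsWithin t₁ (Set.Ioi t₁)) volume :=
        ⟨Set.Ici t₁, Filter.mem_of_superset self_mem_nhdsWithin Set.Ioi_subset_Ici_self,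
          (hAc.mono hsub).aestronglyMeasurable measurableSet_Ici⟩
      exact intervalIntegral.integral_hasDerivWithinAt_right (hInt t₁ le_rfl) hmeas
        (((hAc.mono hsub) t₁ Set.self_mem_Ici).mono Set.Ioi_subset_Ici_self)
    · exact (intervalIntegral.integral_hasDerivAt_right (hInt b hb)
        ⟨Set.Ici t₀, Ici_mem_nhds (lt_of_le_of_lt ht₁ h),
          hAc.aestronglyMeasurable measurableSet_Ici⟩
        (hAc.continuousAt (Ici_mem_nhds (lt_of_le_of_lt ht₁ h)))).hasDerivWithinAt
  have hFc : ContinuousOn F (Set.Ici t₁) := fun b hb => (hF b hb).continuousWithinAt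
  -- Θ' t ≥ Θ' t₁ + c * F t on [t₁, ∞)
  have hgmono : MonotoneOn (fun t => Θ' t - c * F t) (Set.Ici t₁) := by
    apply monotoneOn_of_hasDerivWithinAt_nonneg (convex_Ici _)
      ((hΘ'c.mono hsub).sub (continuousOn_const.mul hFc))
      (f' := fun x => A x * Θ x - c * A x)
    · intro x hx
      exact ((hsol x (hsub (interior_subset hx))).2.mono (interior_subset.trans hsub)).sub
        (((hF x (interior_subset hx)).mono interior_subset).const_mul c)
    · intro x hx
      rw [interior_Ici] at hx
      have h3 := hgec x hx.le
      have h4 := (hApos x (le_trans ht₁ hx.le)).le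
      nlinarith
  have hFmono : MonotoneOn F (Set.Ici t₁) := by
    apply monotoneOn_of_hasDerivWithinAt_nonneg (convex_Ici _) hFc (f' := A)
    · intro x hx
      exact (hF x (interior_subset hx)).mono interior_subset
    · intro x hx
      rw [interior_Ici] at hx
      exact (hApos x (le_trans ht₁ hx.le)).le
  have hΘ'ge : ∀ t ≥ t₁, c * F t ≤ Θ' t := by
    intro t ht
    have := hgmono Set.self_mem_Ici ht ht
    have hF1 : F t₁ = 0 := intervalIntegral.integral_same
    simp only [hF1, mul_zero, sub_zero] at this
    linarith
  -- F tends to infinity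
  have hFtop : Filter.Tendsto F Filter.atTop Filter.atTop := by
    rw [tendsto_atTop]
    intro M
    suffices hex : ∃ t₂, t₁ ≤ t₂ ∧ M ≤ F t₂ by
      obtain ⟨t₂, ht₂, hMt₂⟩ := hex
      filter_upwards [eventually_ge_atTop t₂] with t ht
      exact le_trans hMt₂ (hFmono (Set.mem_Ici.mpr ht₂) (Set.mem_Ici.mpr (le_trans ht₂ ht)) ht)
    by_contra hcon
    push_neg at hcon
    set μ' := volume.withDensity (fun t => ENNReal.ofReal (A t)) with hμ'
    have happ : ∀ s : Set ℝ, MeasurableSet s → μ' s = ∫⁻ t in s, ENNReal.ofReal (A t) :=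
      fun s hs => withDensity_apply _ hs
    have hIcc : ∀ a b : ℝ, t₀ ≤ a → a ≤ b →
        μ' (Set.Icc a b) = ENNReal.ofReal (∫ s in Set.Icc a b, A s) := by
      intro a b ha hab
      rw [happ _ measurableSet_Icc]
      refine (ofReal_integral_eq_lintegral_ofReal ?_ ?_).symm
      · exact (hAc.mono (fun x hx => le_trans ha hx.1)).integrableOn_compact isCompact_Icc
      · exact (ae_restrict_iff' measurableSet_Icc).2
          (Filter.Eventually.of_forall fun x hx => (hApos x (le_trans ha hx.1)).le)
    have hIcc_fin : ∀ a b : ℝ, t₀ ≤ a → μ' (Set.Icc a b) ≠ ⊤ := by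
      intro a b ha
      rcases le_or_gt a b with hab | hab
      · rw [hIcc a b ha hab]; exact ENNReal.ofReal_ne_top
      · rw [Set.Icc_eq_empty (not_le.mpr hab)]; simp
    have htop1 : μ' (Set.Ici t₀) = ⊤ := by rw [happ _ measurableSet_Ici]; exact hAint
    have htop : μ' (Set.Ici t₁) = ⊤ := by
      by_contra hne
      have hsplit : Set.Ici t₀ ⊆ Set.Icc t₀ t₁ ∪ Set.Ici t₁ := by
        intro x hx
        rcases le_or_gt x t₁ with h | h
        · exact Or.inl ⟨hx, h⟩
        · exact Or.inr h.le
      have hle2 : μ' (Set.Ici t₀) ≤ μ' (Set.Icc t₀ t₁) + μ' (Set.Ici t₁) :=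
        (measure_mono hsplit).trans (measure_union_le _ _)
      rw [htop1, top_le_iff] at hle2
      exact absurd hle2 (ENNReal.add_ne_top.mpr ⟨hIcc_fin t₀ t₁ le_rfl, hne⟩)
    -- but μ' (Ici t₁) is bounded by M
    have hcover : Set.Ici t₁ = ⋃ n : ℕ, Set.Icc t₁ (t₁ + n) := by
      ext x
      simp only [Set.mem_Ici, Set.mem_iUnion, Set.mem_Icc]
      constructor
      · intro hx
        obtain ⟨n, hn⟩ := exists_nat_ge (x - t₁)
        exact ⟨n, hx, by linarith⟩
      · rintro ⟨n, hn, -⟩; exact hn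
    have hdir : Directed (· ⊆ ·) (fun n : ℕ => Set.Icc t₁ (t₁ + n)) := by
      apply Monotone.directed_le
      intro m n hmn
      exact Set.Icc_subset_Icc le_rfl (by have := (Nat.cast_le (α := ℝ)).mpr hmn; linarith)
    have hsup : μ' (Set.Ici t₁) = ⨆ n : ℕ, μ' (Set.Icc t₁ (t₁ + n)) := by
      rw [hcover]; exact hdir.measure_iUnion
    have hbd : ∀ n : ℕ, μ' (Set.Icc t₁ (t₁ + n)) ≤ ENNReal.ofReal M := by
      intro n
      have hle : t₁ ≤ t₁ + (n : ℝ) := le_add_of_nonneg_right n.cast_nonneg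
      rw [hIcc t₁ _ ht₁ hle]
      apply ENNReal.ofReal_le_ofReal
      have hFe : F (t₁ + n) = ∫ s in Set.Icc t₁ (t₁ + n), A s := by
        rw [hFdef]
        simp only
        rw [intervalIntegral.integral_of_le hle, ← integral_Icc_eq_integral_Ioc]
      rw [← hFe]
      exact (hcon _ hle).le
    rw [hsup] at htop
    exact absurd (htop ▸ iSup_le hbd) (by simp [ENNReal.ofReal_ne_top])
  -- Θ' tends to infinity
  have hΘ'top : Filter.Tendsto Θ' Filter.atTop Filter.atTop := by
    apply Filter.tendsto_atTop_mono' _ _ (hFtop.const_mul_atTop h1)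
    filter_upwards [eventually_ge_atTop t₁] with t ht
    exact hΘ'ge t ht
  -- finish: pick t₂ with Θ' ≥ 1 beyond t₂
  obtain ⟨t₂, hd1, ht₂⟩ := ((hΘ'top.eventually_ge_atTop 1).and (eventually_ge_atTop t₁)).exists
  have hsub₂ : Set.Ici t₂ ⊆ Set.Ici t₁ := Set.Ici_subset_Ici.mpr ht₂
  have hlast : MonotoneOn (fun t => Θ t - t) (Set.Ici t₂) := by
    apply monotoneOn_of_hasDerivWithinAt_nonneg (convex_Ici _)
      ((hΘc.mono (hsub₂.trans hsub)).sub continuousOn_id)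
      (f' := fun t => Θ' t - 1)
    · intro x hx
      exact ((hsol x (hsub (hsub₂ (interior_subset hx)))).1.mono
        (interior_subset.trans (hsub₂.trans hsub))).sub (hasDerivWithinAt_id x _)
    · intro x hx
      rw [interior_Ici] at hx
      have := hmono' (Set.mem_Ici.mpr ht₂) (Set.mem_Ici.mpr (le_trans ht₂ hx.le)) hx.le
      linarith
  apply Filter.tendsto_atTop_mono' _ _
    (tendsto_atTop_add_const_right Filter.atTop (Θ t₂ - t₂) tendsto_id)
  filter_upwards [eventually_ge_atTop t₂] with t ht
  have h5 : Θ t₂ - t₂ ≤ Θ t - t := hlast Set.self_mem_Ici (Set.mem_Ici.mpr ht) ht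
  simp only [id_eq]
  linarith
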